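/- Let T > 0, α > 0 and β ∈ ℝ with α + β > 0. Let m : [0,T] → ℝ be continuous with m(t) ≤ 1 for all t ∈ [0,T], and let h : [0,T] → ℝ be monotone nondecreasing with 0 ≤ h(t) ≤ 1 for all t ∈ [0,T]. Assume that for every t ∈ [0,T], m(t) ≥ m(0) + ∫₀^t (α·m(s) + β − (α+β)·h(s)) ds. Then h(T) ≥ (e^{αT}(α·m(0) + β) − (α+β)) / ((α+β)(e^{αT} − 1)). -/

import Mathlib

open MeasureTheory Set

/-- Analytic core of Theorem 2 (case `α > 0`): an integral inequality for the
expectation `m` of the barrier function along the stopped process and the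
nondecreasing target-hitting probability `h` yields the lower bound on `h(T)`. -/
theorem reach_avoid_lower_bound_core_pos
    (T α β : ℝ) (hT : 0 < T) (hα : 0 < α) (hαβ : 0 < α + β)
    (m h : ℝ → ℝ)
    (hm : ContinuousOn m (Icc 0 T))
    (hm1 : ∀ t ∈ Icc 0 T, m t ≤ 1)
    (hmono : MonotoneOn h (Icc 0 T))
    (hh0 : ∀ t ∈ Icc 0 T, 0 ≤ h t)
    (hh1 : ∀ t ∈ Icc 0 T, h t ≤ 1)
    (hineq : ∀ t ∈ Icc 0 T,
      m 0 + ∫ s in (0 : ℝ)..t, (α * m s + β - (α + β) * h s) ≤ m t) :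
    (Real.exp (α * T) * (α * m 0 + β) - (α + β))
        / ((α + β) * (Real.exp (α * T) - 1)) ≤ h T := by
  set c : ℝ := α + β with hc
  set K : ℝ := β - c * h T with hKdef
  have hTT : T ∈ Icc (0:ℝ) T := ⟨hT.le, le_rfl⟩
  -- continuity of the constant-shifted integrand
  have hcont : ContinuousOn (fun s => α * m s + K) (Icc 0 T) :=
    (continuousOn_const.mul hm).add continuousOn_const
  -- interval integrability
  have hmInt : ∀ t ∈ Icc (0:ℝ) T, IntervalIntegrable (fun s => α * m s + K) volume 0 t := by
    intro t ht
    apply ContinuousOn.intervalIntegrable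
    refine hcont.mono ?_
    rw [uIcc_of_le ht.1]
    exact Icc_subset_Icc le_rfl ht.2
  have hhInt : ∀ t ∈ Icc (0:ℝ) T,
      IntervalIntegrable (fun s => α * m s + β - c * h s) volume 0 t := by
    intro t ht
    have h1 : IntervalIntegrable (fun s => α * m s + β) volume 0 t := by
      apply ContinuousOn.intervalIntegrable
      refine ((continuousOn_const.mul hm).add continuousOn_const).mono ?_
      rw [uIcc_of_le ht.1]
      exact Icc_subset_Icc le_rfl ht.2
    have h2 : IntervalIntegrable (fun s => h s) volume 0 t := by
      apply MonotoneOn.intervalIntegrable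
      refine hmono.mono ?_
      rw [uIcc_of_le ht.1]
      exact Icc_subset_Icc le_rfl ht.2
    exact h1.sub (h2.const_mul c)
  -- key pointwise bound: the constant-h integral inequality
  have key : ∀ t ∈ Icc (0:ℝ) T, m 0 + (∫ s in (0:ℝ)..t, (α * m s + K)) ≤ m t := by
    intro t ht
    refine le_trans (add_le_add (le_refl (m 0)) ?_) (hineq t ht)
    refine intervalIntegral.integral_mono_on ht.1 (hmInt t ht) (hhInt t ht) ?_
    intro s hs
    have hsT : s ∈ Icc (0:ℝ) T := ⟨hs.1, hs.2.trans ht.2⟩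
    have h1 : h s ≤ h T := hmono hsT hTT hsT.2
    simp only [hKdef]
    nlinarith
  -- the auxiliary functions
  set g : ℝ → ℝ := fun t => m 0 + (∫ s in (0:ℝ)..t, (α * m s + K)) + K / α with hgdef
  set G : ℝ → ℝ := fun t => Real.exp (-α * t) * g t with hGdef
  have hgcont : ContinuousOn g (Icc 0 T) := by
    apply (continuousOn_const.add ?_).add continuousOn_const
    have := intervalIntegral.continuousOn_primitive_interval
      (μ := volume) (f := fun s => α * m s + K) (a := (0:ℝ)) (b := T) ?_
    · rwa [uIcc_of_le hT.le] at this
    · rw [uIcc_of_le hT.le]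
      exact hcont.integrableOn_compact isCompact_Icc
  have hGcont : ContinuousOn G (Icc 0 T) :=
    (Real.continuous_exp.comp (continuous_const.mul continuous_id)).continuousOn.mul hgcont
  -- derivative of g on the interior
  have hgderiv : ∀ t ∈ Ioo (0:ℝ) T, HasDerivAt g (α * m t + K) t := by
    intro t ht
    have hct : ContinuousAt (fun s => α * m s + K) t := by
      have : ContinuousAt m t := hm.continuousAt (Icc_mem_nhds ht.1 ht.2)
      exact (this.const_mul α).add continuousAt_const
    have hmeas : StronglyMeasurableAtFilter (fun s => α * m s + K) (nhds t) volume := by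
      refine ContinuousOn.stronglyMeasurableAtFilter isOpen_Ioo ?_ t ht
      exact hcont.mono Ioo_subset_Icc_self
    have hd := intervalIntegral.integral_hasDerivAt_right
      (hmInt t ⟨ht.1.le, ht.2.le⟩) hmeas hct
    simpa [hgdef] using (hd.const_add (m 0)).add_const (K / α)
  have hGderiv : ∀ t ∈ Ioo (0:ℝ) T,
      HasDerivAt G (Real.exp (-α * t) * (-α) * g t + Real.exp (-α * t) * (α * m t + K)) t := by
    intro t ht
    have he : HasDerivAt (fun x => Real.exp (-α * x)) (Real.exp (-α * t) * (-α)) t := by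
      simpa using ((hasDerivAt_id t).const_mul (-α)).exp
    exact he.mul (hgderiv t ht)
  -- G is monotone on [0, T]
  have hGmono : MonotoneOn G (Icc 0 T) := by
    rw [← interior_Icc] at hgderiv hGderiv
    apply monotoneOn_of_deriv_nonneg (convex_Icc 0 T) hGcont
    · intro t ht
      exact (hGderiv t ht).differentiableAt.differentiableWithinAt
    · intro t ht
      rw [(hGderiv t ht).deriv]
      have ht' : t ∈ Icc (0:ℝ) T := interior_subset ht
      have hk := key t ht'
      have hexp : 0 < Real.exp (-α * t) := Real.exp_pos _
      have hg : g t = (m 0 + (∫ s in (0:ℝ)..t, (α * m s + K))) + K / α := by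
        simp [hgdef, add_assoc]
      rw [hg]
      have h2 : 0 ≤ Real.exp (-α * t) *
          (α * (m t - (m 0 + ∫ s in (0:ℝ)..t, (α * m s + K)))) :=
        mul_nonneg hexp.le (by nlinarith)
      have h3 : Real.exp (-α * t) * (α * (K / α)) = Real.exp (-α * t) * K := by
        rw [mul_div_cancel₀ _ hα.ne']
      nlinarith [h2, h3]
  have hG0T : G 0 ≤ G T := hGmono ⟨le_rfl, hT.le⟩ hTT hT.le
  have hG0 : G 0 = m 0 + K / α := by
    simp [hGdef, hgdef]
  -- end bound: m T ≤ 1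
  have hgT : g T ≤ 1 + K / α := by
    have := key T hTT
    have := hm1 T hTT
    simp only [hgdef]
    linarith
  have hGT : G T ≤ Real.exp (-α * T) * (1 + K / α) := by
    have hexp : 0 < Real.exp (-α * T) := Real.exp_pos _
    simpa [hGdef] using mul_le_mul_of_nonneg_left hgT hexp.le
  -- combine: exp(αT) * (m 0 + K/α) ≤ 1 + K/α
  have hEinv : Real.exp (α * T) * Real.exp (-α * T) = 1 := by
    rw [← Real.exp_add]; ring_nf; exact Real.exp_zero
  have hE1 : 1 < Real.exp (α * T) := by
    calc (1:ℝ) = Real.exp 0 := Real.exp_zero.symm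
      _ < Real.exp (α * T) := Real.exp_lt_exp.mpr (mul_pos hα hT)
  have hmain : Real.exp (α * T) * (m 0 + K / α) ≤ 1 + K / α := by
    have h1 : m 0 + K / α ≤ Real.exp (-α * T) * (1 + K / α) := by
      calc m 0 + K / α = G 0 := hG0.symm
        _ ≤ G T := hG0T
        _ ≤ _ := hGT
    have hEpos : 0 < Real.exp (α * T) := Real.exp_pos _
    calc Real.exp (α * T) * (m 0 + K / α)
        ≤ Real.exp (α * T) * (Real.exp (-α * T) * (1 + K / α)) :=
          mul_le_mul_of_nonneg_left h1 hEpos.le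
      _ = 1 + K / α := by rw [← mul_assoc, hEinv, one_mul]
  -- final algebra
  have hKα : α * (K / α) = K := mul_div_cancel₀ _ hα.ne'
  rw [div_le_iff₀ (mul_pos hαβ (sub_pos.mpr hE1))]
  have hmain' : Real.exp (α * T) * (α * m 0 + K) ≤ α + K := by
    nlinarith [hmain]
  simp only [hKdef, hc] at hmain' ⊢
  nlinarith [hmain']
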